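/- Let G be a profinite group (a compact, Hausdorff, totally disconnected topological group) and let Γ be a finitely generated abstract group such that for every open normal subgroup N of G there exists a surjective group homomorphism from Γ onto the finite group G/N. Then there exists a group homomorphism φ: Γ → G whose image is dense in G. -/

import Mathlib

open QuotientGroup

/-- In a topological group, the quotient by an open normal subgroup is discrete. -/
lemma aux_discreteTopology_quotient {G : Type*} [Group G] [TopologicalSpace G]
    [IsTopologicalGroup G] (N : Subgroup G) [N.Normal] (hN : IsOpen (N : Set G)) :
    DiscreteTopology (G ⧸ N) := by
  apply discreteTopology_of_isOpen_singleton_one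
  have : ({1} : Set (G ⧸ N)) = (QuotientGroup.mk : G → G ⧸ N) '' (N : Set G) := by
    ext x
    simp only [Set.mem_singleton_iff, Set.mem_image, SetLike.mem_coe]
    constructor
    · rintro rfl; exact ⟨1, N.one_mem, rfl⟩
    · rintro ⟨g, hg, rfl⟩; exact (QuotientGroup.eq_one_iff g).mpr hg
  rw [this]
  exact QuotientGroup.isOpenMap_coe _ hN

/-- In a profinite group, an element in every open normal subgroup is trivial. -/
lemma aux_eq_one_of_mem_all {G : Type*} [Group G] [TopologicalSpace G]
    [IsTopologicalGroup G] [CompactSpace G] [T2Space G] [TotallyDisconnectedSpace G]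
    (x : G) (hx : ∀ N : OpenNormalSubgroup G, x ∈ N) : x = 1 := by
  by_contra hne
  have hU : ({x}ᶜ : Set G) ∈ nhds (1 : G) :=
    (isOpen_compl_singleton).mem_nhds (by simpa using (Ne.symm hne))
  obtain ⟨W, ⟨h1W, hWclopen⟩, hWsub⟩ := (nhds_basis_clopen (1 : G)).mem_iff.mp hU
  obtain ⟨H, hH⟩ := IsTopologicalGroup.exist_openNormalSubgroup_sub_clopen_nhds_of_one hWclopen h1W
  exact (hWsub (hH (hx H))) rfl

theorem exists_hom_with_dense_image_of_surjections_onto_finite_quotients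
    (G : Type*) [Group G] [TopologicalSpace G] [IsTopologicalGroup G]
    [CompactSpace G] [T2Space G] [TotallyDisconnectedSpace G]
    (Γ : Type*) [Group Γ] (S : Finset Γ)
    (hS : Subgroup.closure (S : Set Γ) = ⊤)
    (h : ∀ (N : Subgroup G) (_ : N.Normal), IsOpen (N : Set G) →
        ∃ f : Γ →* G ⧸ N, Function.Surjective f) :
    ∃ φ : Γ →* G, Dense (Set.range φ) := by
  classical
  -- the family of constraint sets
  set C : OpenNormalSubgroup G → Set (Γ → G) := fun N =>
    {f | (∀ a b : Γ, (f (a * b))⁻¹ * (f a * f b) ∈ N) ∧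
      Subgroup.closure ((fun s : Γ => (QuotientGroup.mk (f s) : G ⧸ (N : Subgroup G))) '' S)
        = ⊤} with hC
  have hNormal : ∀ N : OpenNormalSubgroup G, ((N : Subgroup G)).Normal := fun N => N.isNormal'
  -- each C N is closed
  have hclosed : ∀ N : OpenNormalSubgroup G, IsClosed (C N) := by
    intro N
    have h1 : IsClosed {f : Γ → G | ∀ a b : Γ, (f (a * b))⁻¹ * (f a * f b) ∈ N} := by
      rw [Set.setOf_forall]
      refine isClosed_iInter fun a => ?_
      rw [Set.setOf_forall]
      refine isClosed_iInter fun b => ?_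
      have hc : Continuous fun f : Γ → G => (f (a * b))⁻¹ * (f a * f b) :=
        ((continuous_apply (a * b)).inv).mul ((continuous_apply a).mul (continuous_apply b))
      exact IsClosed.preimage hc (N.toOpenSubgroup.isClosed)
    have h2 : IsClosed {f : Γ → G |
        Subgroup.closure ((fun s : Γ => (QuotientGroup.mk (f s) : G ⧸ (N : Subgroup G))) '' S)
          = ⊤} := by
      have := aux_discreteTopology_quotient (G := G) (N : Subgroup G) N.isOpen'
      have hcont : Continuous fun f : Γ → G =>
          (fun s : Set.Elem (S : Set Γ) => (QuotientGroup.mk (f s) : G ⧸ (N : Subgroup G))) := by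
        refine continuous_pi fun s => ?_
        exact QuotientGroup.continuous_mk.comp (continuous_apply (s : Γ))
      have : {f : Γ → G |
          Subgroup.closure ((fun s : Γ => (QuotientGroup.mk (f s) : G ⧸ (N : Subgroup G))) '' S)
            = ⊤} = (fun f : Γ → G =>
          (fun s : Set.Elem (S : Set Γ) => (QuotientGroup.mk (f s) : G ⧸ (N : Subgroup G)))) ⁻¹'
          {v : Set.Elem (S : Set Γ) → G ⧸ (N : Subgroup G) | Subgroup.closure (Set.range v) = ⊤} := by
        ext f
        simp only [Set.mem_setOf_eq, Set.mem_preimage]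
        have himg : ((fun s : Γ => (QuotientGroup.mk (f s) : G ⧸ (N : Subgroup G))) '' S) =
            Set.range (fun s : Set.Elem (S : Set Γ) =>
              (QuotientGroup.mk (f s) : G ⧸ (N : Subgroup G))) :=
          Set.image_eq_range _ _
        rw [himg]
      rw [this]
      exact (isClosed_discrete _).preimage hcont
    exact h1.inter h2
  -- each C N is nonempty
  have hne : ∀ N : OpenNormalSubgroup G, (C N).Nonempty := by
    intro N
    obtain ⟨ψ, hψ⟩ := h (N : Subgroup G) (hNormal N) N.isOpen'
    refine ⟨fun γ => (ψ γ).out, ?_, ?_⟩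
    · intro a b
      show ((ψ (a * b)).out)⁻¹ * ((ψ a).out * (ψ b).out) ∈ (N : Subgroup G)
      rw [← QuotientGroup.eq_one_iff]
      simp only [QuotientGroup.mk_mul, QuotientGroup.mk_inv, QuotientGroup.out_eq', map_mul]
      group
    · have hout : (fun s : Γ => (QuotientGroup.mk ((ψ s).out) : G ⧸ (N : Subgroup G)))
          = fun s => ψ s := by
        funext s; exact QuotientGroup.out_eq' (ψ s)
      rw [hout, ← MonoidHom.map_closure, hS, ← MonoidHom.range_eq_map]
      exact MonoidHom.range_eq_top_of_surjective ψ hψ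
  -- monotonicity: smaller subgroup gives smaller constraint set
  have hmono : ∀ (N M : OpenNormalSubgroup G), (N : Subgroup G) ≤ (M : Subgroup G) →
      C N ⊆ C M := by
    intro N M hNM f hf
    refine ⟨fun a b => hNM (hf.1 a b), ?_⟩
    set π : G ⧸ (N : Subgroup G) →* G ⧸ (M : Subgroup G) :=
      QuotientGroup.map (N : Subgroup G) (M : Subgroup G) (MonoidHom.id G)
        (fun x hx => hNM hx) with hπ
    have hπmk : ∀ x : G, π (QuotientGroup.mk x) = QuotientGroup.mk x := fun x =>
      QuotientGroup.map_mk _ _ _ _ x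
    have hπsurj : Function.Surjective π := by
      intro q
      refine ⟨QuotientGroup.mk q.out, ?_⟩
      rw [hπmk, QuotientGroup.out_eq']
    have himg : (fun s : Γ => (QuotientGroup.mk (f s) : G ⧸ (M : Subgroup G))) '' S
        = π '' ((fun s : Γ => (QuotientGroup.mk (f s) : G ⧸ (N : Subgroup G))) '' S) := by
      rw [Set.image_image]
      refine Set.image_congr fun s _ => ?_
      exact (hπmk (f s)).symm
    rw [himg, ← MonoidHom.map_closure, hf.2, ← MonoidHom.range_eq_map]
    exact MonoidHom.range_eq_top_of_surjective π hπsurj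
  -- the family is directed under reverse inclusion
  have hdir : Directed (fun s t : Set (Γ → G) => s ⊇ t) C := by
    intro N M
    exact ⟨N ⊓ M, hmono _ _ inf_le_left, hmono _ _ inf_le_right⟩
  have : Nonempty (OpenNormalSubgroup G) :=
    ⟨{ toOpenSubgroup := ⊤, isNormal' := ⟨fun _ _ g => trivial⟩ }⟩
  -- compactness: the intersection is nonempty
  obtain ⟨f, hf⟩ := IsCompact.nonempty_iInter_of_directed_nonempty_isCompact_isClosed C hdir hne
    (fun N => (hclosed N).isCompact) hclosed
  simp only [Set.mem_iInter] at hf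
  -- f is a group homomorphism
  have hhom : ∀ a b : Γ, f (a * b) = f a * f b := by
    intro a b
    have := aux_eq_one_of_mem_all ((f (a * b))⁻¹ * (f a * f b)) (fun N => (hf N).1 a b)
    rwa [inv_mul_eq_one] at this
  refine ⟨MonoidHom.mk' f hhom, ?_⟩
  -- density of the image
  intro g
  rw [mem_closure_iff]
  intro U hUopen hgU
  obtain ⟨W, ⟨hgW, hWclopen⟩, hWsub⟩ :=
    (nhds_basis_clopen g).mem_iff.mp (hUopen.mem_nhds hgU)
  have hW'clopen : IsClopen ((fun x => g * x) ⁻¹' W) :=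
    hWclopen.preimage (continuous_mul_left g)
  have h1W' : (1 : G) ∈ (fun x => g * x) ⁻¹' W := by simpa using hgW
  obtain ⟨H, hH⟩ :=
    IsTopologicalGroup.exist_openNormalSubgroup_sub_clopen_nhds_of_one hW'clopen h1W'
  -- the composite hom onto G ⧸ H is surjective
  have hrange : ((QuotientGroup.mk' (H : Subgroup G)).comp (MonoidHom.mk' f hhom)).range = ⊤ := by
    rw [eq_top_iff, ← (hf H).2, Subgroup.closure_le]
    rintro x ⟨s, _, rfl⟩
    exact ⟨s, rfl⟩
  have : (QuotientGroup.mk g : G ⧸ (H : Subgroup G)) ∈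
      ((QuotientGroup.mk' (H : Subgroup G)).comp (MonoidHom.mk' f hhom)).range := by
    rw [hrange]; trivial
  obtain ⟨γ, hγ⟩ := this
  have hmem : g⁻¹ * f γ ∈ (H : Subgroup G) := by
    have := QuotientGroup.eq.mp hγ.symm
    simpa using this
  have hfγW : f γ ∈ W := by
    have := hH hmem
    simpa using this
  exact ⟨f γ, hWsub hfγW, γ, rfl⟩
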